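/- For all integers n ≥ 0 and m ≥ 2, sf(n,m) = nd(n,m). -/

import Mathlib

/-- predicate: parts are powers of m and multiplicities not divisible by m -/
def ndP (m : ℕ) {n : ℕ} (p : n.Partition) : Prop :=
  (∀ x ∈ p.parts, ∃ k : ℕ, x = m ^ k) ∧ (∀ x ∈ p.parts, ¬ m ∣ p.parts.count x)

noncomputable def nd' (n m : ℕ) : ℕ := Nat.card {p : n.Partition // ndP m p}

lemma count_one_mod (m w : ℕ) (p : w.Partition)
    (hpow : ∀ x ∈ p.parts, ∃ k : ℕ, x = m ^ k) :
    p.parts.count 1 % m = w % m := by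
  have h := Multiset.sum_filter_add_sum_filter_not (s := p.parts) (fun x => x = 1)
  have h1 : (p.parts.filter (fun x => x = 1)).sum = p.parts.count 1 := by
    rw [Multiset.filter_eq', Multiset.sum_replicate, smul_eq_mul, mul_one]
  have h2 : m ∣ (p.parts.filter (fun a => ¬ a = 1)).sum := by
    refine Multiset.dvd_sum fun x hx => ?_
    rw [Multiset.mem_filter] at hx
    obtain ⟨k, rfl⟩ := hpow x hx.1
    have hk : k ≠ 0 := by rintro rfl; exact hx.2 (pow_zero m)
    exact dvd_pow_self m hk
  obtain ⟨c, hc⟩ := h2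
  have hs := p.parts_sum
  have hw : w = p.parts.count 1 + m * c := by omega
  conv_rhs => rw [hw]
  rw [Nat.add_mul_mod_self_left]

lemma count_one_eq_zero (m w : ℕ) (hm : 2 ≤ m) (p : w.Partition)
    (hp : ndP m p) (hw : w % m = 0) : p.parts.count 1 = 0 := by
  have h := count_one_mod m w p hp.1
  rw [hw] at h
  by_contra hne
  have hmem : (1 : ℕ) ∈ p.parts := by
    rwa [← Multiset.count_pos, Nat.pos_iff_ne_zero]
  exact hp.2 1 hmem (Nat.dvd_of_mod_eq_zero h)

lemma nd'_zero (m : ℕ) : nd' 0 m = 1 := by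
  have hparts : ∀ p : (0:ℕ).Partition, p.parts = 0 := by
    intro p
    by_contra h
    obtain ⟨x, hx⟩ := Multiset.exists_mem_of_ne_zero h
    have h1 : 0 < x := p.parts_pos hx
    have h2 : x ≤ p.parts.sum := Multiset.single_le_sum (fun y _ => Nat.zero_le y) x hx
    rw [p.parts_sum] at h2
    omega
  haveI : Subsingleton {p : (0:ℕ).Partition // ndP m p} :=
    ⟨fun a b => Subtype.ext (Nat.Partition.ext (by rw [hparts, hparts]))⟩
  haveI : Nonempty {p : (0:ℕ).Partition // ndP m p} :=
    ⟨⟨⟨0, by simp, by simp⟩, by constructor <;> simp⟩⟩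
  exact Nat.card_eq_one_iff_unique.2 ⟨‹_›, ‹_›⟩

/-- scaling bijection -/
lemma nd'_mul (m t : ℕ) (hm : 2 ≤ m) : nd' (m * t) m = nd' t m := by
  have hmpos : 0 < m := by omega
  have hinj : Function.Injective (fun x : ℕ => m * x) := fun a b h => by
    simpa using Nat.eq_of_mul_eq_mul_left hmpos h
  symm
  refine Nat.card_eq_of_bijective
    (fun q => ⟨⟨q.1.parts.map (fun x => m * x),
      fun hi => ?_, ?_⟩, fun x hx => ?_, fun x hx => ?_⟩) ⟨?_, ?_⟩
  · -- parts_pos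
    obtain ⟨y, hy, rfl⟩ := Multiset.mem_map.1 hi
    exact Nat.mul_pos hmpos (q.1.parts_pos hy)
  · -- parts_sum
    have : (q.1.parts.map (fun x => m * x)).sum = m * q.1.parts.sum := by
      simpa using Multiset.sum_map_mul_left (a := m) (s := q.1.parts) (f := id)
    rw [this, q.1.parts_sum]
  · -- powers
    obtain ⟨y, hy, rfl⟩ := Multiset.mem_map.1 hx
    obtain ⟨k, rfl⟩ := q.2.1 y hy
    exact ⟨k + 1, (pow_succ' m k).symm⟩
  · -- counts
    obtain ⟨y, hy, rfl⟩ := Multiset.mem_map.1 hx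
    rw [Multiset.count_map_eq_count' _ _ hinj]
    exact q.2.2 y hy
  · -- injective
    rintro ⟨q1, h1⟩ ⟨q2, h2⟩ h
    simp only [Subtype.mk.injEq] at h
    have := congrArg (fun x => x.1.parts) h
    exact Subtype.ext (Nat.Partition.ext (Multiset.map_injective hinj this))
  · -- surjective
    rintro ⟨p, hpow, hcnt⟩
    have hone : (1:ℕ) ∉ p.parts := by
      rw [← Multiset.count_eq_zero]
      exact count_one_eq_zero m (m*t) hm p ⟨hpow, hcnt⟩ (Nat.mul_mod_right m t)
    have hdvd : ∀ x ∈ p.parts, m ∣ x := by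
      intro x hx
      obtain ⟨k, rfl⟩ := hpow x hx
      have hk : k ≠ 0 := by rintro rfl; exact hone (by simpa using hx)
      exact dvd_pow_self m hk
    set s : Multiset ℕ := p.parts.map (fun x => x / m) with hs
    have key : s.map (fun x => m * x) = p.parts := by
      have h0 : p.parts.map (fun x => m * (x / m)) = p.parts := by
        conv_rhs => rw [← Multiset.map_id' p.parts]
        exact Multiset.map_congr rfl (fun x hx => Nat.mul_div_cancel' (hdvd x hx))
      rw [hs, Multiset.map_map]
      simpa [Function.comp] using h0
    have hsum : s.sum = t := by
      have h1 : (s.map (fun x => m * x)).sum = m * s.sum := by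
        simpa using Multiset.sum_map_mul_left (a := m) (s := s) (f := id)
      rw [key, p.parts_sum] at h1
      exact (Nat.eq_of_mul_eq_mul_left hmpos h1).symm
    have hpos : ∀ {i : ℕ}, i ∈ s → 0 < i := by
      intro i hi
      obtain ⟨y, hy, rfl⟩ := Multiset.mem_map.1 hi
      exact Nat.div_pos (Nat.le_of_dvd (p.parts_pos hy) (hdvd y hy)) hmpos
    have hmem : ∀ x ∈ s, m * x ∈ p.parts := by
      intro x hx
      rw [← key]
      exact Multiset.mem_map_of_mem _ hx
    refine ⟨⟨⟨s, hpos, hsum⟩, fun x hx => ?_, fun x hx => ?_⟩, ?_⟩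
    · obtain ⟨y, hy, rfl⟩ := Multiset.mem_map.1 hx
      obtain ⟨k, rfl⟩ := hpow y hy
      have hk : k ≠ 0 := by rintro rfl; exact hone (by simpa using hy)
      refine ⟨k - 1, ?_⟩
      obtain ⟨k, rfl⟩ : ∃ j, k = j + 1 := ⟨k - 1, by omega⟩
      rw [pow_succ']
      simp [Nat.mul_div_cancel_left _ hmpos]
    · have h1 : Multiset.count x s = Multiset.count (m * x) p.parts := by
        rw [← key, Multiset.count_map_eq_count' _ _ hinj]
      rw [h1]
      exact hcnt (m * x) (hmem x hx)
    · exact Subtype.ext (Nat.Partition.ext key)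

lemma not_dvd_of_mod (m c r : ℕ) (hr : 0 < r) (hrm : r < m) (h : c % m = r) : ¬ m ∣ c := by
  rintro ⟨k, rfl⟩
  rw [Nat.mul_mod_right] at h
  omega

/-- adding `r` ones: partitions of `w` (with `m ∣ w`) correspond to partitions
of `w + r` with exactly `r` ones. -/
lemma nd'_add_ones (m w r : ℕ) (hm : 2 ≤ m) (hr : 0 < r) (hrm : r < m) (hw : w % m = 0) :
    nd' w m = Nat.card {p : (w + r).Partition // ndP m p ∧ p.parts.count 1 = r} := by
  refine Nat.card_eq_of_bijective
    (fun q => ⟨⟨q.1.parts + Multiset.replicate r 1, fun hi => ?_, ?_⟩,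
      ⟨fun x hx => ?_, fun x hx => ?_⟩, ?_⟩)
    ⟨?_, ?_⟩
  · -- parts_pos
    rcases Multiset.mem_add.1 hi with h | h
    · exact q.1.parts_pos h
    · rw [Multiset.eq_of_mem_replicate h]; omega
  · -- parts_sum
    rw [Multiset.sum_add, Multiset.sum_replicate, smul_eq_mul, mul_one, q.1.parts_sum]
  · -- powers
    rcases Multiset.mem_add.1 hx with h | h
    · exact q.2.1 x h
    · exact ⟨0, by rw [Multiset.eq_of_mem_replicate h, pow_zero]⟩
  · -- counts
    have hq1 : q.1.parts.count 1 = 0 := count_one_eq_zero m w hm q.1 q.2 hw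
    rw [Multiset.count_add, Multiset.count_replicate]
    by_cases hx1 : x = 1
    · subst hx1
      rw [hq1, if_pos rfl, Nat.zero_add]
      exact not_dvd_of_mod m r r hr hrm (Nat.mod_eq_of_lt hrm)
    · rw [if_neg (fun h => hx1 h.symm), Nat.add_zero]
      have hxm : x ∈ q.1.parts := by
        rcases Multiset.mem_add.1 hx with h | h
        · exact h
        · exact absurd (Multiset.eq_of_mem_replicate h) hx1
      exact q.2.2 x hxm
  · -- count 1 = r
    have hq1 : q.1.parts.count 1 = 0 := count_one_eq_zero m w hm q.1 q.2 hw
    rw [Multiset.count_add, Multiset.count_replicate, hq1, if_pos rfl, Nat.zero_add]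
  · -- injective
    rintro ⟨q1, h1⟩ ⟨q2, h2⟩ h
    simp only [Subtype.mk.injEq] at h
    have h3 := congrArg Nat.Partition.parts h
    simp only at h3
    exact Subtype.ext (Nat.Partition.ext (add_right_cancel h3))
  · -- surjective
    rintro ⟨p, ⟨hpow, hcnt⟩, hc1⟩
    set s : Multiset ℕ := p.parts.filter (fun x => ¬ x = 1) with hs
    have key : s + Multiset.replicate r 1 = p.parts := by
      have h1 : p.parts.filter (fun x => x = 1) = Multiset.replicate r 1 := by
        rw [Multiset.filter_eq', hc1]
      rw [hs, ← h1, add_comm, Multiset.filter_add_not]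
    have hsum : s.sum = w := by
      have h2 := congrArg Multiset.sum key
      rw [Multiset.sum_add, Multiset.sum_replicate, smul_eq_mul, mul_one, p.parts_sum] at h2
      omega
    have hmem : ∀ x ∈ s, x ∈ p.parts ∧ x ≠ 1 := by
      intro x hx
      rw [hs, Multiset.mem_filter] at hx
      exact ⟨hx.1, hx.2⟩
    refine ⟨⟨⟨s, fun hi => p.parts_pos (hmem _ hi).1, hsum⟩, fun x hx => hpow x (hmem x hx).1,
      fun x hx => ?_⟩, ?_⟩
    · have h2 : Multiset.count x s = Multiset.count x p.parts := by
        conv_rhs => rw [← key]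
        rw [Multiset.count_add, Multiset.count_replicate,
          if_neg (fun h => (hmem x hx).2 h.symm), Nat.add_zero]
      rw [h2]
      exact hcnt x (hmem x hx).1
    · exact Subtype.ext (Nat.Partition.ext key)

lemma nd'_add_ones' (m w r n : ℕ) (hm : 2 ≤ m) (hr : 0 < r) (hrm : r < m) (hw : w % m = 0)
    (hn : w + r = n) :
    nd' w m = Nat.card {p : n.Partition // ndP m p ∧ p.parts.count 1 = r} := by
  subst hn
  exact nd'_add_ones m w r hm hr hrm hw

/-- adding `m` ones: partitions of `n - m` correspond to partitions of `n`
whose number of ones is not `n % m` (when `m ≤ n`, `n % m ≠ 0`). -/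
lemma nd'_add_m (m n : ℕ) (hm : 2 ≤ m) (hn : m ≤ n) (hr : n % m ≠ 0) :
    nd' (n - m) m = Nat.card {p : n.Partition // ndP m p ∧ p.parts.count 1 ≠ n % m} := by
  have hmod : (n - m) % m = n % m := by
    conv_rhs => rw [show n = (n - m) + m by omega]
    rw [Nat.add_mod_right]
  have hrm : n % m < m := Nat.mod_lt _ (by omega)
  refine Nat.card_eq_of_bijective
    (fun q => ⟨⟨q.1.parts + Multiset.replicate m 1, fun hi => ?_, ?_⟩,
      ⟨fun x hx => ?_, fun x hx => ?_⟩, ?_⟩)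
    ⟨?_, ?_⟩
  · -- parts_pos
    rcases Multiset.mem_add.1 hi with h | h
    · exact q.1.parts_pos h
    · rw [Multiset.eq_of_mem_replicate h]; omega
  · -- parts_sum
    rw [Multiset.sum_add, Multiset.sum_replicate, smul_eq_mul, mul_one, q.1.parts_sum]
    omega
  · -- powers
    rcases Multiset.mem_add.1 hx with h | h
    · exact q.2.1 x h
    · exact ⟨0, by rw [Multiset.eq_of_mem_replicate h, pow_zero]⟩
  · -- counts
    have hq1 : q.1.parts.count 1 % m = n % m := by
      rw [count_one_mod m _ q.1 q.2.1, hmod]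
    rw [Multiset.count_add, Multiset.count_replicate]
    by_cases hx1 : x = 1
    · subst hx1
      rw [if_pos rfl]
      refine not_dvd_of_mod m _ (n % m) (by omega) hrm ?_
      rw [show Multiset.count 1 q.1.parts + m = Multiset.count 1 q.1.parts + m * 1 by omega,
        Nat.add_mul_mod_self_left, hq1]
    · rw [if_neg (fun h => hx1 h.symm), Nat.add_zero]
      have hxm : x ∈ q.1.parts := by
        rcases Multiset.mem_add.1 hx with h | h
        · exact h
        · exact absurd (Multiset.eq_of_mem_replicate h) hx1
      exact q.2.2 x hxm
  · -- count 1 ≠ n % m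
    rw [Multiset.count_add, Multiset.count_replicate, if_pos rfl]
    omega
  · -- injective
    rintro ⟨q1, h1⟩ ⟨q2, h2⟩ h
    simp only [Subtype.mk.injEq] at h
    have h3 := congrArg Nat.Partition.parts h
    simp only at h3
    exact Subtype.ext (Nat.Partition.ext (add_right_cancel h3))
  · -- surjective
    rintro ⟨p, ⟨hpow, hcnt⟩, hne⟩
    have hc : p.parts.count 1 % m = n % m := count_one_mod m n p hpow
    have hge : m ≤ p.parts.count 1 := by
      by_contra hlt
      push_neg at hlt
      rw [Nat.mod_eq_of_lt hlt] at hc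
      exact hne hc
    set s : Multiset ℕ := p.parts - Multiset.replicate m 1 with hs
    have key : s + Multiset.replicate m 1 = p.parts := by
      rw [hs]
      exact tsub_add_cancel_of_le (Multiset.le_count_iff_replicate_le.1 (by simpa using hge))
    have hsum : s.sum = n - m := by
      have h2 := congrArg Multiset.sum key
      rw [Multiset.sum_add, Multiset.sum_replicate, smul_eq_mul, mul_one, p.parts_sum] at h2
      omega
    have hmem : ∀ x ∈ s, x ∈ p.parts := fun x hx =>
      Multiset.mem_of_le (tsub_le_self) hx
    have hcount : ∀ x, Multiset.count x s + (if x = 1 then m else 0) = Multiset.count x p.parts := by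
      intro x
      have := congrArg (Multiset.count x) key
      rwa [Multiset.count_add, Multiset.count_replicate,
        show (if 1 = x then m else 0) = (if x = 1 then m else 0) by
          by_cases h : x = 1 <;> simp [h, Ne.symm]] at this
    refine ⟨⟨⟨s, fun hi => p.parts_pos (hmem _ hi), hsum⟩, fun x hx => hpow x (hmem x hx),
      fun x hx => ?_⟩, ?_⟩
    · by_cases hx1 : x = 1
      · subst hx1
        have h1 := hcount 1
        rw [if_pos rfl] at h1
        refine not_dvd_of_mod m _ (n % m) (by omega) hrm ?_
        have : Multiset.count 1 s = Multiset.count 1 p.parts - m := by omega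
        rw [this]
        have h2 : Multiset.count 1 p.parts - m + m * 1 = Multiset.count 1 p.parts := by omega
        calc (Multiset.count 1 p.parts - m) % m
            = (Multiset.count 1 p.parts - m + m * 1) % m := by rw [Nat.add_mul_mod_self_left]
          _ = n % m := by rw [h2, hc]
      · have h1 := hcount x
        rw [if_neg hx1, Nat.add_zero] at h1
        rw [h1]
        exact hcnt x (hmem x hx)
    · exact Subtype.ext (Nat.Partition.ext key)

lemma nd'_small (m n : ℕ) (hm : 2 ≤ m) (hn : n < m) :
    Nat.card {p : n.Partition // ndP m p ∧ p.parts.count 1 ≠ n % m} = 0 := by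
  haveI : IsEmpty {p : n.Partition // ndP m p ∧ p.parts.count 1 ≠ n % m} := by
    refine ⟨fun x => ?_⟩
    obtain ⟨p, ⟨hpow, hcnt⟩, hne⟩ := x
    have hc : p.parts.count 1 % m = n % m := count_one_mod m n p hpow
    have hle : p.parts.count 1 ≤ n := by
      have h1 : Multiset.count 1 p.parts ≤ Multiset.card p.parts :=
        Multiset.count_le_card 1 p.parts
      have h2 : Multiset.card p.parts • 1 ≤ p.parts.sum :=
        Multiset.card_nsmul_le_sum (fun x hx => p.parts_pos hx)
      rw [smul_eq_mul, mul_one, p.parts_sum] at h2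
      omega
    rw [Nat.mod_eq_of_lt hn] at hc
    rw [Nat.mod_eq_of_lt (by omega : p.parts.count 1 < m)] at hc
    exact hne (by rw [hc, Nat.mod_eq_of_lt hn])
  exact Nat.card_of_isEmpty

lemma card_split {α : Type*} [Finite α] (P Q : α → Prop) [DecidablePred Q] :
    Nat.card {x // P x} = Nat.card {x // P x ∧ Q x} + Nat.card {x // P x ∧ ¬ Q x} := by
  rw [← Nat.card_sum]
  refine Nat.card_eq_of_bijective
    (fun x => if h : Q x.1 then Sum.inl ⟨x.1, x.2, h⟩ else Sum.inr ⟨x.1, x.2, h⟩) ⟨?_, ?_⟩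
  · rintro ⟨a, ha⟩ ⟨b, hb⟩ h
    apply Subtype.ext
    by_cases hqa : Q a <;> by_cases hqb : Q b <;>
      simp only [hqa, hqb, dif_pos, dif_neg, not_false_iff, Sum.inl.injEq, Sum.inr.injEq,
        Subtype.mk.injEq, reduceCtorEq] at h <;>
      first | exact h | exact h.elim
  · rintro (⟨a, ha, hq⟩ | ⟨a, ha, hq⟩)
    · exact ⟨⟨a, ha⟩, by simp [hq]⟩
    · exact ⟨⟨a, ha⟩, by simp [hq]⟩

lemma nd'_rec (m n : ℕ) (hm : 2 ≤ m) (hr : n % m ≠ 0) :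
    nd' n m = nd' (n - n % m) m + (if n < m then 0 else nd' (n - m) m) := by
  classical
  have hd := Nat.div_add_mod n m
  have hw : (n - n % m) % m = 0 := by
    rw [show n - n % m = m * (n / m) by omega, Nat.mul_mod_right]
  have hrm : n % m < m := Nat.mod_lt _ (by omega)
  have hsplit := card_split (α := n.Partition) (ndP m) (fun p => p.parts.count 1 = n % m)
  have h1 : nd' (n - n % m) m
      = Nat.card {p : n.Partition // ndP m p ∧ p.parts.count 1 = n % m} :=
    nd'_add_ones' m (n - n % m) (n % m) n hm (by omega) hrm hw (by omega)
  rw [show nd' n m = Nat.card {p : n.Partition // ndP m p} from rfl, hsplit, ← h1]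
  congr 1
  by_cases hlt : n < m
  · rw [if_pos hlt, nd'_small m n hm hlt]
  · rw [if_neg hlt]
    exact (nd'_add_m m n hm (by omega) hr).symm




/-- The semi-`m`-Fibonacci numbers: `sfm m 0 = 1`; `sfm m n = sfm m (n / m)` if
`n > 0` and `m ∣ n`; and `sfm m n = sfm m (n - r) + sfm m (n - m)` if
`n ≡ r (mod m)` with `0 < r < m`, where terms with negative argument are `0`
(the value for `m ≤ 1` is junk). -/
def sfm (m : ℕ) : ℕ → ℕ
  | 0 => 1
  | n + 1 =>
    if m ≤ 1 then 0
    else if (n + 1) % m = 0 then sfm m ((n + 1) / m)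
    else sfm m ((n + 1) - (n + 1) % m) +
      if n + 1 < m then 0 else sfm m ((n + 1) - m)
  termination_by n => n
  decreasing_by
  · exact Nat.div_lt_self (Nat.succ_pos n) (by omega)
  · omega
  · omega

/-- `nd n m` is the number of partitions of `n` into parts that are powers of
`m` in which the multiplicity of each part is not divisible by `m`. -/
noncomputable def nd (n m : ℕ) : ℕ :=
  Nat.card {p : n.Partition //
    (∀ x ∈ p.parts, ∃ k : ℕ, x = m ^ k) ∧
    (∀ x ∈ p.parts, ¬ m ∣ p.parts.count x)}

lemma nd_eq_nd' (n m : ℕ) : nd n m = nd' n m := rfl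

theorem sfm_eq_nd (n m : ℕ) (hm : 2 ≤ m) : sfm m n = nd n m := by
  rw [nd_eq_nd']
  induction n using Nat.strong_induction_on with
  | _ n IH =>
    match n with
    | 0 =>
      rw [sfm, nd'_zero]
    | n + 1 =>
      rw [sfm]
      rw [if_neg (by omega : ¬ m ≤ 1)]
      by_cases h : (n + 1) % m = 0
      · rw [if_pos h]
        have hlt : (n + 1) / m < n + 1 := Nat.div_lt_self (Nat.succ_pos n) (by omega)
        rw [IH _ hlt]
        have ht : m * ((n + 1) / m) = n + 1 :=
          Nat.mul_div_cancel' (Nat.dvd_of_mod_eq_zero h)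
        conv_rhs => rw [← ht]
        rw [nd'_mul m _ hm]
      · rw [if_neg h, nd'_rec m (n + 1) hm h]
        have h1 : n + 1 - (n + 1) % m < n + 1 := by
          have := Nat.mod_le (n + 1) m
          omega
        rw [IH _ h1]
        congr 1
        by_cases hlt : n + 1 < m
        · rw [if_pos hlt, if_pos hlt]
        · rw [if_neg hlt, if_neg hlt, IH _ (by omega)]
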